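/- For all real numbers δ > 0 and γ ≥ 0, ∑_{n=⌈γ⌉}^{∞} exp(−δ²·(√n − √γ)²/2) ≤ 1 + 2/δ² + √(2πγ)/δ. -/

import Mathlib

open Real

/-- For all `δ > 0` and `γ ≥ 0`,
`∑_{n=⌈γ⌉}^∞ exp(−δ²·(√n − √γ)²/2) ≤ 1 + 2/δ² + √(2πγ)/δ`. -/
theorem stmt14 (δ γ : ℝ) (hδ : 0 < δ) (hγ : 0 ≤ γ) :
    (∑' n : {n : ℕ // ⌈γ⌉₊ ≤ n},
        Real.exp (-(δ ^ 2 * (Real.sqrt ((n : ℕ) : ℝ) - Real.sqrt γ) ^ 2) / 2))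
      ≤ 1 + 2 / δ ^ 2 + Real.sqrt (2 * Real.pi * γ) / δ := by
  classical
  have hπ := Real.pi_pos
  set f : ℝ → ℝ := fun x => Real.exp (-(δ ^ 2 * (Real.sqrt x - Real.sqrt γ) ^ 2) / 2)
    with hfdef
  set m : ℕ := ⌈γ⌉₊ with hmdef
  have hγm : γ ≤ (m : ℝ) := Nat.le_ceil γ
  have hcont : Continuous f := by
    rw [hfdef]; fun_prop
  have hfpos : ∀ x : ℝ, 0 ≤ f x := fun x => (Real.exp_pos _).le
  have hRHS0 : 0 ≤ 1 + 2 / δ ^ 2 + Real.sqrt (2 * Real.pi * γ) / δ := by positivity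
  -- antitonicity on [γ, ∞)
  have hanti : ∀ x y : ℝ, γ ≤ x → x ≤ y → f y ≤ f x := by
    intro x y hx hxy
    apply Real.exp_le_exp.2
    have h1 : Real.sqrt γ ≤ Real.sqrt x := Real.sqrt_le_sqrt hx
    have h2 : Real.sqrt x ≤ Real.sqrt y := Real.sqrt_le_sqrt hxy
    have h3 : (Real.sqrt x - Real.sqrt γ) ^ 2 ≤ (Real.sqrt y - Real.sqrt γ) ^ 2 :=
      pow_le_pow_left₀ (by linarith) (by linarith) 2
    nlinarith [sq_nonneg δ]
  -- key finite bound
  have key : ∀ N : ℕ, ∑ n ∈ Finset.Icc m N, f n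
      ≤ 1 + 2 / δ ^ 2 + Real.sqrt (2 * Real.pi * γ) / δ := by
    intro N
    rcases lt_or_ge N m with h | hmN
    · rw [Finset.Icc_eq_empty (by omega)]
      simpa using hRHS0
    have hNγ : γ ≤ (N : ℝ) := le_trans hγm (by exact_mod_cast hmN)
    have hmN' : (m : ℝ) ≤ (N : ℝ) := by exact_mod_cast hmN
    rw [Finset.Icc_eq_cons_Ioc hmN, Finset.sum_cons]
    -- first term ≤ 1
    have hfm : f (m : ℝ) ≤ 1 := by
      rw [hfdef]
      simp only
      rw [Real.exp_le_one_iff]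
      have h0 : 0 ≤ δ ^ 2 * (Real.sqrt (m : ℝ) - Real.sqrt γ) ^ 2 := by positivity
      linarith
    -- rewrite the tail sum
    have htail : ∑ n ∈ Finset.Ioc m N, f n = ∑ i ∈ Finset.Ico m N, f ((i + 1 : ℕ) : ℝ) := by
      rw [← Finset.Ico_add_one_add_one_eq_Ioc]
      rw [← Finset.map_add_right_Ico _ _ 1, Finset.sum_map]
      simp [addRightEmbedding]
    -- tail sum ≤ ∫_m^N f
    have hI1 : ∑ i ∈ Finset.Ico m N, f ((i + 1 : ℕ) : ℝ) ≤ ∫ x in (m : ℝ)..(N : ℝ), f x :=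
      AntitoneOn.sum_le_integral_Ico hmN
        (fun x hx y _ hxy => hanti x y (le_trans hγm hx.1) hxy)
    -- ∫_m^N f ≤ ∫_γ^N f
    have hI2 : ∫ x in (m : ℝ)..(N : ℝ), f x ≤ ∫ x in γ..(N : ℝ), f x :=
      intervalIntegral.integral_mono_interval hγm hmN' le_rfl
        (Filter.Eventually.of_forall fun x => hfpos x) (hcont.intervalIntegrable _ _)
    -- change of variables x = (u + √γ)²
    set b : ℝ := Real.sqrt (N : ℝ) - Real.sqrt γ with hbdef
    have hb : 0 ≤ b := by
      have := Real.sqrt_le_sqrt hNγ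
      rw [hbdef]; linarith
    have hφ : ∀ u ∈ Set.uIcc (0 : ℝ) b,
        HasDerivAt (fun u : ℝ => (u + Real.sqrt γ) ^ 2) (2 * (u + Real.sqrt γ)) u := by
      intro u _
      have h := ((hasDerivAt_id u).add_const (Real.sqrt γ)).fun_pow 2
      refine h.congr_deriv ?_
      simp [mul_comm]
    have hcov := intervalIntegral.integral_comp_smul_deriv (a := 0) (b := b)
      (f := fun u : ℝ => (u + Real.sqrt γ) ^ 2) (f' := fun u : ℝ => 2 * (u + Real.sqrt γ))
      (g := f) hφ (by fun_prop) hcont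
    have he0 : ((0 : ℝ) + Real.sqrt γ) ^ 2 = γ := by
      rw [zero_add, Real.sq_sqrt hγ]
    have heb : (b + Real.sqrt γ) ^ 2 = (N : ℝ) := by
      have h1 : b + Real.sqrt γ = Real.sqrt (N : ℝ) := by rw [hbdef]; ring
      rw [h1, Real.sq_sqrt (Nat.cast_nonneg N)]
    beta_reduce at hcov
    rw [he0, heb] at hcov
    -- identify the new integrand
    have hEq : Set.EqOn
        (fun u : ℝ => (2 * (u + Real.sqrt γ)) • (f ∘ fun u : ℝ => (u + Real.sqrt γ) ^ 2) u)
        (fun u : ℝ => 2 * u * Real.exp (-(δ ^ 2 * u ^ 2) / 2)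
          + 2 * Real.sqrt γ * Real.exp (-(δ ^ 2 * u ^ 2) / 2)) (Set.uIcc 0 b) := by
      intro u hu
      rw [Set.uIcc_of_le hb] at hu
      have hu0 : 0 ≤ u := hu.1
      simp only [Function.comp, smul_eq_mul, hfdef]
      have hs : Real.sqrt ((u + Real.sqrt γ) ^ 2) = u + Real.sqrt γ :=
        Real.sqrt_sq (by positivity)
      rw [hs]
      have h2 : u + Real.sqrt γ - Real.sqrt γ = u := by ring
      rw [h2]
      ring
    rw [intervalIntegral.integral_congr hEq] at hcov
    -- split the integral
    have hint1 : IntervalIntegrable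
        (fun u : ℝ => 2 * u * Real.exp (-(δ ^ 2 * u ^ 2) / 2)) MeasureTheory.volume 0 b :=
      (by fun_prop : Continuous fun u : ℝ => 2 * u * Real.exp (-(δ ^ 2 * u ^ 2) / 2)).intervalIntegrable _ _
    have hint2 : IntervalIntegrable
        (fun u : ℝ => 2 * Real.sqrt γ * Real.exp (-(δ ^ 2 * u ^ 2) / 2))
        MeasureTheory.volume 0 b :=
      (by fun_prop : Continuous fun u : ℝ =>
        2 * Real.sqrt γ * Real.exp (-(δ ^ 2 * u ^ 2) / 2)).intervalIntegrable _ _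
    rw [intervalIntegral.integral_add hint1 hint2] at hcov
    -- bound the first piece by 2/δ²
    have hA : ∫ u in (0 : ℝ)..b, 2 * u * Real.exp (-(δ ^ 2 * u ^ 2) / 2) ≤ 2 / δ ^ 2 := by
      have hd : ∀ u ∈ Set.uIcc (0 : ℝ) b,
          HasDerivAt (fun u : ℝ => -(2 / δ ^ 2) * Real.exp (-(δ ^ 2 * u ^ 2) / 2))
            (2 * u * Real.exp (-(δ ^ 2 * u ^ 2) / 2)) u := by
        intro u _
        have h1 : HasDerivAt (fun u : ℝ => -(δ ^ 2 * u ^ 2) / 2) (-(δ ^ 2 * u)) u := by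
          have h := (((hasDerivAt_pow 2 u).const_mul (δ ^ 2)).fun_neg).div_const 2
          refine h.congr_deriv ?_
          ring
        have h2 := (h1.exp).const_mul (-(2 / δ ^ 2))
        refine h2.congr_deriv ?_
        field_simp
      rw [intervalIntegral.integral_eq_sub_of_hasDerivAt hd hint1]
      have hE : 0 < Real.exp (-(δ ^ 2 * b ^ 2) / 2) := Real.exp_pos _
      have hq : 0 < 2 / δ ^ 2 := by positivity
      have h0 : -(δ ^ 2 * (0 : ℝ) ^ 2) / 2 = 0 := by norm_num
      rw [h0, Real.exp_zero]
      nlinarith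
    -- bound the second piece by √(2πγ)/δ
    have hB : ∫ u in (0 : ℝ)..b, 2 * Real.sqrt γ * Real.exp (-(δ ^ 2 * u ^ 2) / 2)
        ≤ Real.sqrt (2 * Real.pi * γ) / δ := by
      rw [intervalIntegral.integral_const_mul]
      have hrw : ∀ u : ℝ, Real.exp (-(δ ^ 2 * u ^ 2) / 2) = Real.exp (-(δ ^ 2 / 2) * u ^ 2) := by
        intro u; congr 1; ring
      have hgauss : ∫ u in (0 : ℝ)..b, Real.exp (-(δ ^ 2 * u ^ 2) / 2)
          ≤ Real.sqrt (Real.pi / (δ ^ 2 / 2)) / 2 := by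
        rw [intervalIntegral.integral_of_le hb]
        simp only [hrw]
        rw [← integral_gaussian_Ioi (δ ^ 2 / 2)]
        apply MeasureTheory.setIntegral_mono_set
        · exact (integrable_exp_neg_mul_sq (by positivity)).integrableOn
        · exact Filter.Eventually.of_forall fun x => (Real.exp_pos _).le
        · exact Filter.Eventually.of_forall Set.Ioc_subset_Ioi_self
      have hval : 2 * Real.sqrt γ * (Real.sqrt (Real.pi / (δ ^ 2 / 2)) / 2)
          = Real.sqrt (2 * Real.pi * γ) / δ := by
        rw [show Real.pi / (δ ^ 2 / 2) = 2 * Real.pi / δ ^ 2 by ring,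
          Real.sqrt_div (by positivity) (δ ^ 2), Real.sqrt_sq hδ.le,
          Real.sqrt_mul (by positivity) γ]
        field_simp
      calc 2 * Real.sqrt γ * ∫ u in (0 : ℝ)..b, Real.exp (-(δ ^ 2 * u ^ 2) / 2)
          ≤ 2 * Real.sqrt γ * (Real.sqrt (Real.pi / (δ ^ 2 / 2)) / 2) :=
            mul_le_mul_of_nonneg_left hgauss (by positivity)
        _ = _ := hval
    have hIoc : ∑ n ∈ Finset.Ioc m N, f n
        ≤ 2 / δ ^ 2 + Real.sqrt (2 * Real.pi * γ) / δ := by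
      rw [htail]
      calc ∑ i ∈ Finset.Ico m N, f ((i + 1 : ℕ) : ℝ)
          ≤ ∫ x in (m : ℝ)..(N : ℝ), f x := hI1
        _ ≤ ∫ x in γ..(N : ℝ), f x := hI2
        _ = _ + _ := hcov.symm
        _ ≤ 2 / δ ^ 2 + Real.sqrt (2 * Real.pi * γ) / δ := add_le_add hA hB
    linarith
  -- from finite bound to tsum
  have hsubst : (∑' n : {n : ℕ // m ≤ n},
      Real.exp (-(δ ^ 2 * (Real.sqrt ((n : ℕ) : ℝ) - Real.sqrt γ) ^ 2) / 2))
      = ∑' n : {n : ℕ // m ≤ n}, f ((n : ℕ) : ℝ) := rfl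
  rw [hsubst]
  apply tsum_le_of_sum_le' hRHS0
  intro s
  set t : Finset ℕ := s.image Subtype.val with htdef
  have hsum : ∑ i ∈ s, f ((i : ℕ) : ℝ) = ∑ n ∈ t, f (n : ℝ) := by
    rw [htdef, Finset.sum_image]
    intro a _ c _ h
    exact Subtype.ext h
  rw [hsum]
  calc ∑ n ∈ t, f (n : ℝ) ≤ ∑ n ∈ Finset.Icc m (t.sup id), f (n : ℝ) := by
        apply Finset.sum_le_sum_of_subset_of_nonneg
        · intro n hn
          simp only [Finset.mem_Icc]
          refine ⟨?_, Finset.le_sup (f := id) hn⟩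
          obtain ⟨a, _, rfl⟩ := Finset.mem_image.1 (htdef ▸ hn)
          exact a.2
        · intro i _ _
          exact hfpos _
    _ ≤ _ := key _
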